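/- If a word S is s-primitive over an alphabet of size k and |S| > γ(k-1), then every factor of S of length γ(k-1)+1 contains at least k different letters. -/
import Mathlib


/-- `C` is an s-cover of `S`: `C` occurs in `S` as a subsequence, and every
position of `S` belongs to some occurrence of `C` as a subsequence, i.e. a
strictly increasing list of positions of `S` spelling `C`. -/
def IsSCover {α : Type*} (C S : List α) : Prop :=
  C.Sublist S ∧
    ∀ i : Fin S.length, ∃ I : List (Fin S.length),
      I.Chain' (fun a b => (a : ℕ) < (b : ℕ)) ∧ i ∈ I ∧ I.map S.get = C

/-- A word is s-primitive if it has no s-cover strictly shorter than itself. -/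
def SPrimitive {α : Type*} (S : List α) : Prop :=
  ∀ C : List α, IsSCover C S → S.length ≤ C.length

/-- `γ k` is the maximum length of an s-primitive word over an alphabet of size `k`
(words over `ℕ` using at most `k` distinct letters). -/
def GammaSpec (γ : ℕ → ℕ) : Prop :=
  ∀ k : ℕ,
    IsGreatest {n : ℕ | ∃ S : List ℕ, S.toFinset.card ≤ k ∧ SPrimitive S ∧ S.length = n} (γ k)

lemma coe_list_eq {n : ℕ} (I : List (Fin n)) :
    (do let a ← I; pure ((a : ℕ))) = I.map Fin.val := by
  simp [List.bind_eq_flatMap, ← List.map_eq_flatMap]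

lemma scover_append {α : Type*} (P Q : List α) {C U : List α}
    (hUne : U ≠ []) (h : IsSCover C U) : IsSCover (P ++ C ++ Q) (P ++ U ++ Q) := by
  obtain ⟨hsub, hcov⟩ := h
  refine ⟨(List.Sublist.append (List.Sublist.refl P) hsub).append (List.Sublist.refl Q), ?_⟩
  simp only [coe_list_eq] at hcov ⊢
  have hS : (P ++ U ++ Q).length = P.length + U.length + Q.length := by
    simp only [List.length_append]
  have hu : 0 < U.length := List.length_pos_iff.mpr hUne
  have hgetP : ∀ (j : ℕ) (hj : j < P.length), (P ++ U ++ Q)[j]'(by omega) = P[j] := by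
    intro j hj
    rw [List.getElem_append_left (by simp only [List.length_append]; omega)]
    rw [List.getElem_append_left hj]
  have hgetU : ∀ (j : ℕ) (hj : j < U.length),
      (P ++ U ++ Q)[P.length + j]'(by omega) = U[j] := by
    intro j hj
    rw [List.getElem_append_left (by simp only [List.length_append]; omega)]
    rw [List.getElem_append_right (by omega)]
    simp
  have hgetQ : ∀ (j : ℕ) (hj : j < Q.length),
      (P ++ U ++ Q)[P.length + U.length + j]'(by omega) = Q[j] := by
    intro j hj
    rw [List.getElem_append_right (by simp only [List.length_append]; omega)]
    congr 1
    simp only [List.length_append]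
    omega
  let idxP : List (Fin (P ++ U ++ Q).length) := (List.finRange P.length).map
    (fun j => ⟨j.val, by have := j.isLt; omega⟩)
  let shift : Fin U.length → Fin (P ++ U ++ Q).length :=
    fun j => ⟨P.length + j.val, by have := j.isLt; omega⟩
  let idxQ : List (Fin (P ++ U ++ Q).length) := (List.finRange Q.length).map
    (fun j => ⟨P.length + U.length + j.val, by have := j.isLt; omega⟩)
  have memP : ∀ x ∈ idxP, (x : ℕ) < P.length := by
    intro x hx
    simp only [idxP, List.mem_map, List.mem_finRange, true_and] at hx
    obtain ⟨j, rfl⟩ := hx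
    exact j.isLt
  have memM : ∀ (J : List (Fin U.length)), ∀ x ∈ J.map shift,
      P.length ≤ (x : ℕ) ∧ (x : ℕ) < P.length + U.length := by
    intro J x hx
    simp only [List.mem_map] at hx
    obtain ⟨j, -, rfl⟩ := hx
    refine ⟨Nat.le_add_right _ _, ?_⟩
    have := j.isLt
    simp only [shift]
    omega
  have memQ : ∀ x ∈ idxQ, P.length + U.length ≤ (x : ℕ) := by
    intro x hx
    simp only [idxQ, List.mem_map, List.mem_finRange, true_and] at hx
    obtain ⟨j, rfl⟩ := hx
    exact Nat.le_add_right _ _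
  have key : ∀ J : List (Fin U.length),
      (J.map Fin.val).Chain' (· < ·) → J.map U.get = C →
      ((idxP ++ J.map shift ++ idxQ).map Fin.val).Chain' (· < ·) ∧
      (idxP ++ J.map shift ++ idxQ).map (P ++ U ++ Q).get = P ++ C ++ Q := by
    intro J hJchain hJmap
    constructor
    · apply List.Pairwise.isChain
      simp only [List.map_append]
      rw [List.pairwise_append, List.pairwise_append]
      have hJpw : J.Pairwise (fun a b => Fin.val a < Fin.val b) :=
        List.pairwise_map.mp (List.isChain_iff_pairwise.mp hJchain)
      refine ⟨⟨?_, ?_, ?_⟩, ?_, ?_⟩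
      · rw [List.map_map, List.pairwise_map]
        exact (List.pairwise_lt_finRange _).imp (fun h => h)
      · rw [List.map_map, List.pairwise_map]
        refine hJpw.imp ?_
        intro a b h
        show P.length + (a : ℕ) < P.length + (b : ℕ)
        omega
      · intro a ha b hb
        rw [List.map_map, List.mem_map] at hb
        rw [List.mem_map] at ha
        obtain ⟨x, hx, rfl⟩ := ha
        obtain ⟨y, -, rfl⟩ := hb
        have := memP x hx
        show (x : ℕ) < P.length + (y : ℕ)
        omega
      · rw [List.map_map, List.pairwise_map]
        refine (List.pairwise_lt_finRange _).imp ?_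
        intro a b h
        show P.length + U.length + (a : ℕ) < P.length + U.length + (b : ℕ)
        have : (a : ℕ) < (b : ℕ) := h
        omega
      · intro a ha b hb
        rw [List.mem_map] at hb
        obtain ⟨y, hy, rfl⟩ := hb
        have hyb := memQ y hy
        rw [List.mem_append, List.mem_map, List.mem_map] at ha
        rcases ha with ⟨x, hx, rfl⟩ | ⟨z, hz, rfl⟩
        · have := memP x hx
          omega
        · have := (memM J z hz).2
          omega
    · simp only [List.map_append]
      congr 1
      congr 1
      · apply List.ext_getElem
        · simp [idxP]
        · intro n h1 h2
          simp only [idxP, List.getElem_map, List.getElem_finRange, Fin.cast_mk,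
            List.get_eq_getElem]
          exact hgetP n (by simpa [idxP] using h1)
      · rw [List.map_map]
        rw [← hJmap]
        apply List.map_congr_left
        intro j hj
        simp only [Function.comp, shift, List.get_eq_getElem]
        exact hgetU j.val j.isLt
      · apply List.ext_getElem
        · simp [idxQ]
        · intro n h1 h2
          simp only [idxQ, List.getElem_map, List.getElem_finRange, Fin.cast_mk,
            List.get_eq_getElem]
          exact hgetQ n (by simpa [idxQ] using h1)
  intro i
  by_cases h1 : (i : ℕ) < P.length
  · obtain ⟨J, hc, -, hm⟩ := hcov ⟨0, hu⟩
    obtain ⟨kc, km⟩ := key J hc hm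
    refine ⟨idxP ++ J.map shift ++ idxQ, kc, ?_, km⟩
    refine List.mem_append.mpr (Or.inl (List.mem_append.mpr (Or.inl ?_)))
    simp only [idxP, List.mem_map, List.mem_finRange, true_and]
    exact ⟨⟨i, h1⟩, by ext; rfl⟩
  · by_cases h2 : (i : ℕ) < P.length + U.length
    · obtain ⟨J, hc, hmem, hm⟩ := hcov ⟨(i : ℕ) - P.length, by omega⟩
      obtain ⟨kc, km⟩ := key J hc hm
      refine ⟨idxP ++ J.map shift ++ idxQ, kc, ?_, km⟩
      refine List.mem_append.mpr (Or.inl (List.mem_append.mpr (Or.inr ?_)))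
      refine List.mem_map.mpr ⟨_, hmem, ?_⟩
      simp only [shift]
      ext
      simp only
      omega
    · obtain ⟨J, hc, -, hm⟩ := hcov ⟨0, hu⟩
      obtain ⟨kc, km⟩ := key J hc hm
      refine ⟨idxP ++ J.map shift ++ idxQ, kc, ?_, km⟩
      refine List.mem_append.mpr (Or.inr ?_)
      simp only [idxQ, List.mem_map, List.mem_finRange, true_and]
      refine ⟨⟨(i : ℕ) - P.length - U.length, by have := i.isLt; omega⟩, ?_⟩
      ext
      simp only
      omega

theorem factor_contains_all_letters (γ : ℕ → ℕ) (hγ : GammaSpec γ)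
    (S : List ℕ) (k : ℕ) (hcard : S.toFinset.card = k)
    (hprim : SPrimitive S) (hlen : γ (k - 1) < S.length) :
    ∀ P U Q : List ℕ, S = P ++ U ++ Q → U.length = γ (k - 1) + 1 →
      k ≤ U.toFinset.card := by
  intro P U Q hSplit hUlen
  by_contra hcontra
  push_neg at hcontra
  have hUcard : U.toFinset.card ≤ k - 1 := by omega
  have hUne : U ≠ [] := by
    intro h
    simp [h] at hUlen
  have hUnotprim : ¬ SPrimitive U := by
    intro hp
    have := (hγ (k - 1)).2 ⟨U, hUcard, hp, rfl⟩
    omega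
  rw [SPrimitive] at hUnotprim
  push_neg at hUnotprim
  obtain ⟨C, hC, hClen⟩ := hUnotprim
  have hcover := scover_append P Q hUne hC
  have hle := hprim (P ++ C ++ Q) (by rw [hSplit]; exact hcover)
  have h1 : S.length = P.length + U.length + Q.length := by
    rw [hSplit]; simp only [List.length_append]
  simp only [List.length_append] at hle
  omega
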